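/- Let μ be a probability measure on Ω̃ (with its Borel σ-algebra) that assigns measure zero to the set Θ̃ of all r ∈ Ω̃ whose poset (ℕ, r) is rogue. Then for every Borel subset A of Ω̃ that is invariant under order-isomorphism, there exists a set B in the σ-algebra generated by the stem sets such that μ(A Δ B) = 0. (Main Theorem / Corollary 1: the stem sets generate the covariant σ-algebra up to sets of measure zero.) -/

import Mathlib

/-- A poset (given by its order relation `le`) is *past-finite* if the past
`{y | y ≤ x}` of every element `x` is finite. -/
def PastFinite {α : Type} (le : α → α → Prop) : Prop := ∀ x : α, {y : α | le y x}.Finite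

/-- The finite poset `s` on `Fin n` *is a stem in* the poset `(α, le)`: there is an
order-embedding of `s` into `(α, le)` whose image is a down-closed (lower) set. -/
def IsStemIn {α : Type} {n : ℕ} (s : Fin n → Fin n → Prop) (le : α → α → Prop) : Prop :=
  ∃ f : Fin n → α, Function.Injective f ∧ (∀ i j, s i j ↔ le (f i) (f j)) ∧
    ∀ (x : α) (j : Fin n), le x (f j) → ∃ i, f i = x

/-- Two posets *have the same stems* if every finite poset is a stem in one iff it is a
stem in the other (every finite poset is isomorphic to one on some `Fin n`). -/
def SameStems {α β : Type} (le₁ : α → α → Prop) (le₂ : β → β → Prop) : Prop :=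
  ∀ (n : ℕ) (s : Fin n → Fin n → Prop), IsStemIn s le₁ ↔ IsStemIn s le₂

/-- The posets `(α, le₁)` and `(β, le₂)` are order-isomorphic. -/
def OrderIsoRel {α β : Type} (le₁ : α → α → Prop) (le₂ : β → β → Prop) : Prop :=
  ∃ e : α ≃ β, ∀ x y : α, le₁ x y ↔ le₂ (e x) (e y)

/-- Strict order relation associated to `le` (in a partial order). -/
def LtRel {α : Type} (le : α → α → Prop) (x y : α) : Prop := le x y ∧ x ≠ y

/-- `x` is maximal: no element lies strictly above it. -/
def IsMaximalRel {α : Type} (le : α → α → Prop) (x : α) : Prop := ∀ y, le x y → y = x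

/-- There is a chain `x₀ < x₁ < ⋯ < x_k = x` (of length `k`) with top element `x`. -/
def ChainTo {α : Type} (le : α → α → Prop) (x : α) (k : ℕ) : Prop :=
  ∃ f : Fin (k + 1) → α, (∀ i j : Fin (k + 1), i < j → LtRel le (f i) (f j)) ∧ f (Fin.last k) = x

/-- `x` has level `k`: `k` is the maximum length of a chain with top element `x`. -/
def HasLevel {α : Type} (le : α → α → Prop) (x : α) (k : ℕ) : Prop :=
  ChainTo le x k ∧ ∀ m, ChainTo le x m → m ≤ k

/-- A causet (countable past-finite partial order) is *rogue* if there exists a causet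
not order-isomorphic to it having the same stems. -/
def IsRogueRel {α : Type} (le : α → α → Prop) : Prop :=
  ∃ (β : Type) (le' : β → β → Prop), IsPartialOrder β le' ∧ Countable β ∧ PastFinite le' ∧
    ¬ OrderIsoRel le le' ∧ SameStems le le'

/-- Ω̃: the completed labeled causets, modelled as the transitive natural relations on ℕ,
viewed as a subset of the product space `(ℕ × ℕ) → Bool`. -/
def OmegaT : Set ((ℕ × ℕ) → Bool) :=
  {r | (∀ x y z : ℕ, r (x, y) = true → r (y, z) = true → r (x, z) = true) ∧
       (∀ x y : ℕ, r (x, y) = true → x < y)}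

/-- The partial order `≤` on ℕ determined by `r ∈ Ω̃` (the reflexive closure of `r`). -/
def leOf (r : OmegaT) (x y : ℕ) : Prop := x = y ∨ (r : (ℕ × ℕ) → Bool) (x, y) = true

/-- The stem set of a finite poset `s` on `Fin n`:
`stem(s) = {r ∈ Ω̃ : s is a stem in the poset (ℕ, r)}`. -/
def stemSet (n : ℕ) (s : Fin n → Fin n → Prop) : Set OmegaT :=
  {r | IsStemIn s (leOf r)}

/-- The family of all stem sets (where `s` ranges over finite partial orders). -/
def stemFamily : Set (Set OmegaT) :=
  {S | ∃ (n : ℕ) (s : Fin n → Fin n → Prop), IsPartialOrder (Fin n) s ∧ S = stemSet n s}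

/-- The cylinder set of a relation `s` on `{0,…,n-1}`: the relations in Ω̃ whose
restriction to `{0,…,n-1}` equals `s`. -/
def cyl (n : ℕ) (s : Fin n → Fin n → Bool) : Set OmegaT :=
  {r | ∀ i j : Fin n, (r : (ℕ × ℕ) → Bool) ((i : ℕ), (j : ℕ)) = s i j}

/-- `s` is a transitive natural relation on `{0,…,n-1}`. -/
def IsFinCauset (n : ℕ) (s : Fin n → Fin n → Bool) : Prop :=
  (∀ i j k : Fin n, s i j = true → s j k = true → s i k = true) ∧
  (∀ i j : Fin n, s i j = true → (i : ℕ) < (j : ℕ))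

/-- The family of all cylinder sets. -/
def cylFamily : Set (Set OmegaT) :=
  {C | ∃ (n : ℕ) (s : Fin n → Fin n → Bool), IsFinCauset n s ∧ C = cyl n s}

/-- A subset of Ω̃ is invariant under order-isomorphism (i.e. covariant). -/
def IsoInvariant (A : Set OmegaT) : Prop :=
  ∀ r₁ r₂ : OmegaT, OrderIsoRel (leOf r₁) (leOf r₂) → r₁ ∈ A → r₂ ∈ A

/-- Θ̃: the set of `r ∈ Ω̃` whose poset `(ℕ, r)` is rogue. -/
def ThetaT : Set OmegaT := {r | IsRogueRel (leOf r)}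


open MeasureTheory Set Function

section Aux

/-! ### Basic facts about `leOf` -/

lemma leOf_refl (r : OmegaT) (x : ℕ) : leOf r x x := Or.inl rfl

lemma leOf_trans (r : OmegaT) {x y z : ℕ} (h1 : leOf r x y) (h2 : leOf r y z) :
    leOf r x z := by
  rcases h1 with rfl | h1
  · exact h2
  · rcases h2 with rfl | h2
    · exact Or.inr h1
    · exact Or.inr (r.2.1 x y z h1 h2)

lemma leOf_le (r : OmegaT) {x y : ℕ} (h : leOf r x y) : x ≤ y := by
  rcases h with rfl | h
  · exact le_rfl
  · exact (r.2.2 x y h).le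

lemma leOf_antisymm (r : OmegaT) {x y : ℕ} (h1 : leOf r x y) (h2 : leOf r y x) : x = y :=
  le_antisymm (leOf_le r h1) (leOf_le r h2)

lemma isPartialOrder_leOf (r : OmegaT) : IsPartialOrder ℕ (leOf r) :=
  { refl := leOf_refl r
    trans := fun _ _ _ h1 h2 => leOf_trans r h1 h2
    antisymm := fun _ _ h1 h2 => leOf_antisymm r h1 h2 }

lemma pastFinite_leOf (r : OmegaT) : PastFinite (leOf r) := by
  intro x
  exact (Set.finite_Iic x).subset fun y hy => leOf_le r hy

lemma iso_of_sameStems_of_not_rogue {r₁ r₂ : OmegaT} (h : ¬ IsRogueRel (leOf r₁))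
    (hs : SameStems (leOf r₁) (leOf r₂)) : OrderIsoRel (leOf r₁) (leOf r₂) := by
  by_contra hni
  exact h ⟨ℕ, leOf r₂, isPartialOrder_leOf r₂, inferInstance, pastFinite_leOf r₂, hni, hs⟩

/-! ### Natural relabeling of finite posets -/

lemma exists_natural_relabel {n : ℕ} {s : Fin n → Fin n → Prop}
    (hrefl : ∀ i, s i i) (htrans : ∀ {i j k}, s i j → s j k → s i k)
    (hanti : ∀ {i j}, s i j → s j i → i = j) :
    ∃ g : Fin n ≃ Fin n, ∀ i j, s i j → i ≠ j → (g i : ℕ) < (g j : ℕ) := by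
  classical
  haveI : IsPartialOrder (Fin n) s :=
    { refl := hrefl
      trans := fun _ _ _ h1 h2 => htrans h1 h2
      antisymm := fun _ _ h1 h2 => hanti h1 h2 }
  obtain ⟨t, ht, hst⟩ := extend_partialOrder s
  haveI := ht
  have htt : ∀ {a b c : Fin n}, t a b → t b c → t a c := fun h1 h2 => Trans.trans h1 h2
  have hta : ∀ {a b : Fin n}, t a b → t b a → a = b := fun h1 h2 => Std.Antisymm.antisymm _ _ h1 h2
  have htot : ∀ a b : Fin n, t a b ∨ t b a := fun a b => Std.Total.total a b
  set rk : Fin n → ℕ := fun i => (Finset.univ.filter (fun j => t j i ∧ j ≠ i)).card with hrk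
  have hmono : ∀ {i j : Fin n}, t i j → i ≠ j → rk i < rk j := by
    intro i j hij hne
    have hsub : Finset.univ.filter (fun k => t k i ∧ k ≠ i) ⊆
        Finset.univ.filter (fun k => t k j ∧ k ≠ j) := by
      intro k hk
      rcases Finset.mem_filter.1 hk with ⟨-, hki, hkine⟩
      refine Finset.mem_filter.2 ⟨Finset.mem_univ _, htt hki hij, ?_⟩
      rintro rfl
      exact hkine (hta hki hij)
    have hmem : i ∈ Finset.univ.filter (fun k => t k j ∧ k ≠ j) :=
      Finset.mem_filter.2 ⟨Finset.mem_univ _, hij, hne⟩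
    have hnot : i ∉ Finset.univ.filter (fun k => t k i ∧ k ≠ i) := by
      intro hmem'
      exact (Finset.mem_filter.1 hmem').2.2 rfl
    exact Finset.card_lt_card ((Finset.ssubset_iff_of_subset hsub).2 ⟨i, hmem, hnot⟩)
  have hlt : ∀ i : Fin n, rk i < n := by
    intro i
    have hsub : Finset.univ.filter (fun j => t j i ∧ j ≠ i) ⊆ Finset.univ.erase i := by
      intro k hk
      exact Finset.mem_erase.2 ⟨(Finset.mem_filter.1 hk).2.2, Finset.mem_univ _⟩
    calc rk i ≤ (Finset.univ.erase i).card := Finset.card_le_card hsub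
      _ < Finset.univ.card := Finset.card_erase_lt_of_mem (Finset.mem_univ _)
      _ = n := by simp
  set g0 : Fin n → Fin n := fun i => ⟨rk i, hlt i⟩ with hg0
  have hinj : Function.Injective g0 := by
    intro i j hij
    by_contra hne
    have : rk i = rk j := congrArg Fin.val hij
    rcases htot i j with h | h
    · exact absurd this (Nat.ne_of_lt (hmono h hne))
    · exact absurd this.symm (Nat.ne_of_lt (hmono h (Ne.symm hne)))
  refine ⟨Equiv.ofBijective g0 (Finite.injective_iff_bijective.1 hinj), ?_⟩
  intro i j hsij hne
  exact hmono (hst i j hsij) hne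

lemma isStemIn_relabel {n : ℕ} {s s' : Fin n → Fin n → Prop} (g : Fin n ≃ Fin n)
    (hs : ∀ a b, s' a b ↔ s (g.symm a) (g.symm b)) {α : Type} {le : α → α → Prop}
    (h : IsStemIn s le) : IsStemIn s' le := by
  obtain ⟨f, hinj, hiff, hdc⟩ := h
  refine ⟨f ∘ g.symm, hinj.comp g.symm.injective, fun a b => (hs a b).trans (hiff _ _), ?_⟩
  intro x j hle
  obtain ⟨i, hi⟩ := hdc x (g.symm j) hle
  exact ⟨g i, by simp [hi]⟩

/-! ### The stem indicator map -/

/-- The reflexive closure of a boolean relation on `Fin n`. -/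
def relOf {n : ℕ} (m : Fin n → Fin n → Bool) : Fin n → Fin n → Prop :=
  fun a b => a = b ∨ m a b = true

/-- Index type: all finite causets with vertex set `Fin n`, labeled naturally. -/
def StemIdx : Type := Σ n : ℕ, {m : Fin n → Fin n → Bool // IsFinCauset n m}

instance : Countable StemIdx :=
  inferInstanceAs (Countable (Σ n : ℕ, {m : Fin n → Fin n → Bool // IsFinCauset n m}))

lemma isPartialOrder_relOf {n : ℕ} {m : Fin n → Fin n → Bool} (hm : IsFinCauset n m) :
    IsPartialOrder (Fin n) (relOf m) :=
  { refl := fun a => Or.inl rfl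
    trans := by
      rintro a b c (rfl | h1) h2
      · exact h2
      · rcases h2 with rfl | h2
        · exact Or.inr h1
        · exact Or.inr (hm.1 a b c h1 h2)
    antisymm := by
      rintro a b (rfl | h1) h2
      · rfl
      · rcases h2 with rfl | h2
        · rfl
        · exact absurd (hm.2 a b h1) (not_lt_of_gt (hm.2 b a h2)) }

/-- The indicator function recording, for `r ∈ Ω̃`, which finite causets are stems in `(ℕ, r)`. -/
noncomputable def stemInd (r : OmegaT) (k : StemIdx) : Bool :=
  @decide (r ∈ stemSet k.1 (relOf k.2.1)) (Classical.propDecidable _)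

lemma stemInd_eq_true {r : OmegaT} {k : StemIdx} :
    stemInd r k = true ↔ r ∈ stemSet k.1 (relOf k.2.1) := by
  simp [stemInd]

lemma isStemIn_transfer {r₁ r₂ : OmegaT} (h : stemInd r₁ = stemInd r₂)
    {n : ℕ} {s : Fin n → Fin n → Prop} (hst : IsStemIn s (leOf r₁)) :
    IsStemIn s (leOf r₂) := by
  classical
  obtain ⟨f, hinj, hiff, hdc⟩ := hst
  have hrefl : ∀ i, s i i := fun i => (hiff i i).mpr (leOf_refl r₁ _)
  have htrans : ∀ {i j k : Fin n}, s i j → s j k → s i k := fun h1 h2 =>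
    (hiff _ _).mpr (leOf_trans r₁ ((hiff _ _).mp h1) ((hiff _ _).mp h2))
  have hanti : ∀ {i j : Fin n}, s i j → s j i → i = j := fun h1 h2 =>
    hinj (leOf_antisymm r₁ ((hiff _ _).mp h1) ((hiff _ _).mp h2))
  obtain ⟨g, hg⟩ := exists_natural_relabel hrefl (fun h1 h2 => htrans h1 h2)
    (fun h1 h2 => hanti h1 h2)
  set m : Fin n → Fin n → Bool := fun a b => decide (s (g.symm a) (g.symm b) ∧ a ≠ b) with hm
  have hmval : ∀ {a b}, m a b = true ↔ (s (g.symm a) (g.symm b) ∧ a ≠ b) := by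
    intro a b; simp [hm]
  have hmc : IsFinCauset n m := by
    constructor
    · intro a b c h1 h2
      rcases hmval.1 h1 with ⟨h1s, h1ne⟩
      rcases hmval.1 h2 with ⟨h2s, h2ne⟩
      refine hmval.2 ⟨htrans h1s h2s, ?_⟩
      rintro rfl
      exact h1ne (g.symm.injective (hanti h1s h2s))
    · intro a b hab
      rcases hmval.1 hab with ⟨hs', hne⟩
      have := hg (g.symm a) (g.symm b) hs' (fun hh => hne (g.symm.injective hh))
      simpa using this
  have hsiff : ∀ a b, relOf m a b ↔ s (g.symm a) (g.symm b) := by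
    intro a b
    constructor
    · rintro (rfl | hab)
      · exact hrefl _
      · exact (hmval.1 hab).1
    · intro hab
      by_cases hab' : a = b
      · exact Or.inl hab'
      · exact Or.inr (hmval.2 ⟨hab, hab'⟩)
  have key : ∀ r : OmegaT, IsStemIn s (leOf r) ↔ r ∈ stemSet n (relOf m) := by
    intro r
    constructor
    · exact fun hh => isStemIn_relabel g hsiff hh
    · intro hh
      refine isStemIn_relabel g.symm ?_ hh
      intro a b
      rw [Equiv.symm_symm]
      exact ((hsiff (g a) (g b)).trans (by simp)).symm
  have h1 : stemInd r₁ ⟨n, m, hmc⟩ = true :=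
    stemInd_eq_true.2 ((key r₁).1 ⟨f, hinj, hiff, hdc⟩)
  have h2 : stemInd r₂ ⟨n, m, hmc⟩ = true := (congrFun h ⟨n, m, hmc⟩).symm.trans h1
  exact (key r₂).2 (stemInd_eq_true.1 h2)

lemma sameStems_of_stemInd_eq {r₁ r₂ : OmegaT} (h : stemInd r₁ = stemInd r₂) :
    SameStems (leOf r₁) (leOf r₂) :=
  fun _ _ => ⟨fun hh => isStemIn_transfer h hh, fun hh => isStemIn_transfer h.symm hh⟩

end Aux
section Meas

open MeasureTheory Set Function

lemma isClosed_omegaT : IsClosed OmegaT := by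
  have key : ∀ (p q u : ℕ × ℕ) (P : Bool → Bool → Bool → Prop),
      IsClosed {r : (ℕ × ℕ) → Bool | P (r p) (r q) (r u)} := by
    intro p q u P
    have : {r : (ℕ × ℕ) → Bool | P (r p) (r q) (r u)} =
        (fun r : (ℕ × ℕ) → Bool => (r p, r q, r u)) ⁻¹'
          {b : Bool × Bool × Bool | P b.1 b.2.1 b.2.2} := rfl
    rw [this]
    exact (Set.Finite.isClosed (Set.toFinite _)).preimage
      ((continuous_apply p).prodMk ((continuous_apply q).prodMk (continuous_apply u)))
  have : OmegaT =
      (⋂ x : ℕ, ⋂ y : ℕ, ⋂ z : ℕ,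
        {r : (ℕ × ℕ) → Bool | r (x, y) = true → r (y, z) = true → r (x, z) = true}) ∩
      (⋂ x : ℕ, ⋂ y : ℕ, {r : (ℕ × ℕ) → Bool | r (x, y) = true → x < y}) := by
    ext r
    simp only [OmegaT, Set.mem_inter_iff, Set.mem_iInter, Set.mem_setOf_eq]
  rw [this]
  refine IsClosed.inter ?_ ?_
  · exact isClosed_iInter fun x => isClosed_iInter fun y => isClosed_iInter fun z =>
      key (x, y) (y, z) (x, z) (fun a b c => a = true → b = true → c = true)
  · exact isClosed_iInter fun x => isClosed_iInter fun y =>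
      key (x, y) (x, y) (x, y) (fun a _ _ => a = true → x < y)

instance : PolishSpace OmegaT :=
  haveI : PolishSpace ((ℕ × ℕ) → Bool) := by
    haveI : TopologicalSpace.SeparableSpace ((ℕ × ℕ) → Bool) := inferInstance
    haveI : TopologicalSpace.IsCompletelyMetrizableSpace ((ℕ × ℕ) → Bool) := inferInstance
    infer_instance
  isClosed_omegaT.polishSpace

lemma borel_omegaT_eq : borel OmegaT = (inferInstance : MeasurableSpace OmegaT) :=
  BorelSpace.measurable_eq.symm

lemma measurableSet_leOf_set (a b : ℕ) : MeasurableSet {r : OmegaT | leOf r a b} := by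
  classical
  by_cases h : a = b
  · have : {r : OmegaT | leOf r a b} = Set.univ := eq_univ_of_forall fun r => Or.inl h
    rw [this]; exact MeasurableSet.univ
  · have : {r : OmegaT | leOf r a b} =
        (fun r : OmegaT => (r : (ℕ × ℕ) → Bool) (a, b)) ⁻¹' {true} := by
      ext r; simp [leOf, h]
    rw [this]
    exact ((measurable_pi_apply _).comp measurable_subtype_coe) (measurableSet_singleton _)

lemma measurableSet_stemSet (n : ℕ) (s : Fin n → Fin n → Prop) :
    MeasurableSet (stemSet n s) := by
  classical
  have hrw : stemSet n s = ⋃ f : Fin n → ℕ,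
      ({r : OmegaT | Function.Injective f} ∩
        ((⋂ i, ⋂ j, {r : OmegaT | s i j ↔ leOf r (f i) (f j)}) ∩
          (⋂ x, ⋂ j, {r : OmegaT | leOf r x (f j) → ∃ i, f i = x}))) := by
    ext r
    simp only [stemSet, IsStemIn, mem_iUnion, mem_inter_iff, mem_iInter, mem_setOf_eq]
  rw [hrw]
  refine MeasurableSet.iUnion fun f => ?_
  have hinjset : MeasurableSet {r : OmegaT | Function.Injective f} := by
    by_cases hinj : Function.Injective f
    · have : {r : OmegaT | Function.Injective f} = univ := eq_univ_of_forall fun r => hinj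
      rw [this]; exact MeasurableSet.univ
    · have : {r : OmegaT | Function.Injective f} = ∅ :=
        eq_empty_iff_forall_notMem.2 fun r hr => hinj hr
      rw [this]; exact MeasurableSet.empty
  refine hinjset.inter (MeasurableSet.inter ?_ ?_)
  · refine MeasurableSet.iInter fun i => MeasurableSet.iInter fun j => ?_
    by_cases hij : s i j
    · have : {r : OmegaT | s i j ↔ leOf r (f i) (f j)} = {r | leOf r (f i) (f j)} := by
        ext r; simp [hij]
      rw [this]; exact measurableSet_leOf_set _ _
    · have : {r : OmegaT | s i j ↔ leOf r (f i) (f j)} = {r | leOf r (f i) (f j)}ᶜ := by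
        ext r; simp [hij]
      rw [this]; exact (measurableSet_leOf_set _ _).compl
  · refine MeasurableSet.iInter fun x => MeasurableSet.iInter fun j => ?_
    by_cases hx : ∃ i, f i = x
    · have : {r : OmegaT | leOf r x (f j) → ∃ i, f i = x} = univ :=
        eq_univ_of_forall fun r _ => hx
      rw [this]; exact MeasurableSet.univ
    · have : {r : OmegaT | leOf r x (f j) → ∃ i, f i = x} = {r | leOf r x (f j)}ᶜ := by
        ext r; simp [hx]
      rw [this]; exact (measurableSet_leOf_set _ _).compl

lemma measurable_stemInd : Measurable stemInd := by
  refine measurable_pi_lambda _ fun k => measurable_to_countable' fun b => ?_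
  cases b
  · have : (fun r => stemInd r k) ⁻¹' {false} = (stemSet k.1 (relOf k.2.1))ᶜ := by
      ext r; simp [stemInd]
    rw [this]; exact (measurableSet_stemSet _ _).compl
  · have : (fun r => stemInd r k) ⁻¹' {true} = stemSet k.1 (relOf k.2.1) := by
      ext r; simp [stemInd]
    rw [this]; exact measurableSet_stemSet _ _

lemma measurable_stemInd_sigma :
    Measurable[MeasurableSpace.generateFrom stemFamily] stemInd := by
  letI mSig : MeasurableSpace OmegaT := MeasurableSpace.generateFrom stemFamily
  refine measurable_pi_lambda _ fun k => measurable_to_countable' fun b => ?_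
  have hbasic : MeasurableSet[MeasurableSpace.generateFrom stemFamily]
      (stemSet k.1 (relOf k.2.1)) :=
    MeasurableSpace.measurableSet_generateFrom
      ⟨k.1, relOf k.2.1, isPartialOrder_relOf k.2.2, rfl⟩
  cases b
  · have : (fun r => stemInd r k) ⁻¹' {false} = (stemSet k.1 (relOf k.2.1))ᶜ := by
      ext r; simp [stemInd]
    rw [this]; exact hbasic.compl
  · have : (fun r => stemInd r k) ⁻¹' {true} = stemSet k.1 (relOf k.2.1) := by
      ext r; simp [stemInd]
    rw [this]; exact hbasic

end Meas
open MeasureTheory in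
theorem stem_aux_main (m : MeasurableSpace OmegaT)
    (hm : m = (Subtype.instMeasurableSpace : MeasurableSpace OmegaT))
    (μ : @Measure OmegaT m) (hTheta : μ ThetaT = 0) :
    ∀ A : Set OmegaT, MeasurableSet[m] A → IsoInvariant A →
      ∃ B : Set OmegaT, MeasurableSet[MeasurableSpace.generateFrom stemFamily] B ∧
        μ (symmDiff A B) = 0 := by
  subst hm
  intro A hA hAinv
  set T : Set OmegaT := toMeasurable μ ThetaT with hTdef
  have hTmeas : MeasurableSet T := measurableSet_toMeasurable μ _
  have hμT : μ T = 0 := by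
    rw [hTdef, measure_toMeasurable]; exact hTheta
  have hAT : MeasurableSet (A \ T) := hA.diff hTmeas
  have hAcT : MeasurableSet (Aᶜ \ T) := hA.compl.diff hTmeas
  have hS1 : AnalyticSet (stemInd '' (A \ T)) := hAT.analyticSet_image measurable_stemInd
  have hS2 : AnalyticSet (stemInd '' (Aᶜ \ T)) := hAcT.analyticSet_image measurable_stemInd
  have hdisj : Disjoint (stemInd '' (A \ T)) (stemInd '' (Aᶜ \ T)) := by
    rw [Set.disjoint_left]
    rintro t ⟨r₁, ⟨hr₁A, hr₁T⟩, rfl⟩ ⟨r₂, ⟨hr₂A, hr₂T⟩, heq⟩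
    have hss : SameStems (leOf r₁) (leOf r₂) := sameStems_of_stemInd_eq heq.symm
    have hnr : ¬ IsRogueRel (leOf r₁) := fun hr => hr₁T (subset_toMeasurable μ ThetaT hr)
    exact hr₂A (hAinv r₁ r₂ (iso_of_sameStems_of_not_rogue hnr hss) hr₁A)
  obtain ⟨u, hS1u, hS2u, humeas⟩ := hS1.measurablySeparable hS2 hdisj
  refine ⟨stemInd ⁻¹' u, measurable_stemInd_sigma humeas, ?_⟩
  have hsub : symmDiff A (stemInd ⁻¹' u) ⊆ T := by
    rw [Set.symmDiff_def]
    rintro r (⟨hrA, hrB⟩ | ⟨hrB, hrA⟩)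
    · by_contra hrT
      exact hrB (hS1u ⟨r, ⟨hrA, hrT⟩, rfl⟩)
    · by_contra hrT
      exact (Set.disjoint_left.1 hS2u) ⟨r, ⟨hrA, hrT⟩, rfl⟩ hrB
  exact measure_mono_null hsub hμT

open MeasureTheory in
/-- **Main Theorem**: if `μ` is a probability measure on Ω̃ (with its Borel σ-algebra)
with `μ(Θ̃) = 0`, then for every isomorphism-invariant Borel set `A` there is a set `B`
in the σ-algebra generated by the stem sets with `μ(A Δ B) = 0`. -/
theorem stem_sets_generate_up_to_measure_zero
    (μ : @Measure OmegaT (borel OmegaT))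
    (hprob : @IsProbabilityMeasure OmegaT (borel OmegaT) μ)
    (hTheta : μ ThetaT = 0) :
    ∀ A : Set OmegaT, MeasurableSet[borel OmegaT] A → IsoInvariant A →
      ∃ B : Set OmegaT, MeasurableSet[MeasurableSpace.generateFrom stemFamily] B ∧
        μ (symmDiff A B) = 0 :=
  stem_aux_main (borel OmegaT) borel_omegaT_eq μ hTheta
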